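/- Let A ∈ ℂ^{n×n} be given by A = L(I_n + E Z^H)R, where L, R ∈ ℂ^{n×n} are unitary, Z ∈ ℂ^{n×k}, and E = [I_k; 0_{(n−k)×k}]. Let Z = QG be an economic QR factorization of Z (Q ∈ ℂ^{n×k} with Q^H Q = I_k, G ∈ ℂ^{k×k} upper triangular). Set m = n + k, X = [Q; −I_k] ∈ ℂ^{m×k}, and Û = I_m − X X^H. Then: (1) Û is unitary; and (2) the matrix Â = diag(L, I_k) · ( Û + ([G^H; 0_{n×k}] + X) · [Q; 0_{k×k}]^H ) · diag(R, I_k) ∈ ℂ^{m×m} satisfies Â = [[A, B], [0_{k×n}, 0_{k×k}]] for some B ∈ ℂ^{n×k}; that is, the last k rows of Â are zero and the leading n×n principal submatrix of Â equals A. -/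

import Mathlib

open Matrix

/-- The `n × k` matrix `E = [I_k; 0]` whose top `k × k` block is the identity. -/
def EkM (n k : ℕ) : Matrix (Fin n) (Fin k) ℂ :=
  Matrix.of fun x j => if x.1 = j.1 then 1 else 0

/-- Vertical stacking `[A; B]` of an `n × k` matrix on top of a `k × k` matrix. -/
def stackM (n k : ℕ) (A : Matrix (Fin n) (Fin k) ℂ) (B : Matrix (Fin k) (Fin k) ℂ) :
    Matrix (Fin (n + k)) (Fin k) ℂ :=
  Matrix.of fun x j => if h : x.1 < n then A ⟨x.1, h⟩ j else B ⟨x.1 - n, by omega⟩ j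

/-- The `(n+k) × k` matrix `[M; 0]` with `M ∈ ℂ^{k×k}` in the first `k` rows and
zeros in the remaining `n` rows. -/
def topM (n k : ℕ) (M : Matrix (Fin k) (Fin k) ℂ) : Matrix (Fin (n + k)) (Fin k) ℂ :=
  Matrix.of fun x j => if h : x.1 < k then M ⟨x.1, h⟩ j else 0

/-- The block diagonal matrix `diag(L, I_k)` for `L ∈ ℂ^{n×n}`. -/
def diagLI (n k : ℕ) (L : Matrix (Fin n) (Fin n) ℂ) :
    Matrix (Fin (n + k)) (Fin (n + k)) ℂ :=
  Matrix.of fun x y =>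
    if h : x.1 < n then (if h' : y.1 < n then L ⟨x.1, h⟩ ⟨y.1, h'⟩ else 0)
    else if x.1 = y.1 then 1 else 0

/-- The matrix `X = [Q; −I_k]`. -/
def XM (n k : ℕ) (Q : Matrix (Fin n) (Fin k) ℂ) : Matrix (Fin (n + k)) (Fin k) ℂ :=
  stackM n k Q (-1)

/-- The matrix `Û = I_m − X X^H`, with `X = [Q; −I_k]` and `m = n + k`. -/
noncomputable def UhatM (n k : ℕ) (Q : Matrix (Fin n) (Fin k) ℂ) :
    Matrix (Fin (n + k)) (Fin (n + k)) ℂ :=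
  1 - XM n k Q * (XM n k Q).conjTranspose

/-- The embedded matrix
`Â = diag(L, I_k) · (Û + ([G^H; 0] + X) · [Q; 0]^H) · diag(R, I_k)`. -/
noncomputable def AhatM (n k : ℕ) (L R : Matrix (Fin n) (Fin n) ℂ)
    (Q : Matrix (Fin n) (Fin k) ℂ) (G : Matrix (Fin k) (Fin k) ℂ) :
    Matrix (Fin (n + k)) (Fin (n + k)) ℂ :=
  diagLI n k L *
    (UhatM n k Q +
      (topM n k G.conjTranspose + XM n k Q) * (stackM n k Q 0).conjTranspose) *
    diagLI n k R

section Aux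

lemma aux_fromBlocks_add {m₁ m₂ n₁ n₂ : Type*} (A A' : Matrix m₁ n₁ ℂ) (B B' : Matrix m₁ n₂ ℂ)
    (C C' : Matrix m₂ n₁ ℂ) (D D' : Matrix m₂ n₂ ℂ) :
    fromBlocks A B C D + fromBlocks A' B' C' D' =
      fromBlocks (A + A') (B + B') (C + C') (D + D') := by
  ext (i | i) (j | j) <;> simp [fromBlocks]

lemma aux_fromBlocks_sub {m₁ m₂ n₁ n₂ : Type*} (A A' : Matrix m₁ n₁ ℂ) (B B' : Matrix m₁ n₂ ℂ)
    (C C' : Matrix m₂ n₁ ℂ) (D D' : Matrix m₂ n₂ ℂ) :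
    fromBlocks A B C D - fromBlocks A' B' C' D' =
      fromBlocks (A - A') (B - B') (C - C') (D - D') := by
  ext (i | i) (j | j) <;> simp [fromBlocks]

lemma aux_fromRows_add {m₁ m₂ n' : Type*} (A A' : Matrix m₁ n' ℂ) (B B' : Matrix m₂ n' ℂ) :
    fromRows A B + fromRows A' B' = fromRows (A + A') (B + B') := by
  ext (i | i) j <;> simp

lemma aux_stack (n k : ℕ) (P : Matrix (Fin n) (Fin k) ℂ) (B : Matrix (Fin k) (Fin k) ℂ) :
    (stackM n k P B).submatrix (⇑(finSumFinEquiv : Fin n ⊕ Fin k ≃ Fin (n + k))) id =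
      fromRows P B := by
  ext x j
  cases x with
  | inl i =>
    simp [stackM]
  | inr i =>
    have h1 : ¬ ((finSumFinEquiv (Sum.inr i) : Fin (n + k)).1 < n) := by simp
    simp only [submatrix_apply, id, stackM, of_apply, dif_neg h1, fromRows_apply_inr]
    congr 1
    apply Fin.ext
    simp

lemma aux_EkM_mul (n k : ℕ) (M : Matrix (Fin k) (Fin k) ℂ) (i : Fin n) (j : Fin k) :
    (EkM n k * M) i j = if h : i.1 < k then M ⟨i.1, h⟩ j else 0 := by
  rw [mul_apply]
  by_cases h : i.1 < k
  · rw [dif_pos h, Finset.sum_eq_single (⟨i.1, h⟩ : Fin k)]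
    · simp [EkM]
    · intro b _ hb
      have hne : ¬ i.1 = b.1 := fun he => hb (Fin.ext he.symm)
      simp [EkM, hne]
    · simp
  · rw [dif_neg h]
    apply Finset.sum_eq_zero
    intro b _
    have hb := b.isLt
    have hne : ¬ i.1 = b.1 := by omega
    simp [EkM, hne]

lemma aux_top (n k : ℕ) (hkn : k ≤ n) (M : Matrix (Fin k) (Fin k) ℂ) :
    (topM n k M).submatrix (⇑(finSumFinEquiv : Fin n ⊕ Fin k ≃ Fin (n + k))) id =
      fromRows (EkM n k * M) 0 := by
  ext x j
  cases x with
  | inl i =>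
    simp [topM, aux_EkM_mul]
  | inr i =>
    simp only [submatrix_apply, id, topM, of_apply, fromRows_apply_inr, Matrix.zero_apply]
    rw [dif_neg (by simp; omega)]

lemma aux_diag (n k : ℕ) (L : Matrix (Fin n) (Fin n) ℂ) :
    (diagLI n k L).submatrix (⇑(finSumFinEquiv : Fin n ⊕ Fin k ≃ Fin (n + k)))
      (⇑(finSumFinEquiv : Fin n ⊕ Fin k ≃ Fin (n + k))) =
      fromBlocks L 0 0 (1 : Matrix (Fin k) (Fin k) ℂ) := by
  ext x y
  cases x with
  | inl i =>
    cases y with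
    | inl j => simp [diagLI]
    | inr j =>
      have h' : ¬ ((finSumFinEquiv (Sum.inr j) : Fin (n + k)).1 < n) := by simp
      simp [diagLI, dif_neg h']
  | inr i =>
    have h : ¬ ((finSumFinEquiv (Sum.inr i) : Fin (n + k)).1 < n) := by simp
    cases y with
    | inl j =>
      have hj := j.isLt
      simp only [submatrix_apply, diagLI, of_apply, dif_neg h, fromBlocks_apply₂₁,
        Matrix.zero_apply]
      rw [if_neg (by simp; omega)]
    | inr j =>
      simp [diagLI, dif_neg h, one_apply, Fin.ext_iff]

end Aux

/-- **Embedding of a unitary plus rank-`k` matrix.**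
Let `A = L (I + E Z^H) R` with `L, R` unitary, `E = [I_k; 0]`, and let `Z = Q G` be an
economic QR factorization of `Z`. Set `m = n + k`, `X = [Q; −I_k]` and
`Û = I_m − X X^H`. Then (1) `Û` is unitary, and (2) the matrix
`Â = diag(L, I_k) (Û + ([G^H; 0] + X)[Q; 0]^H) diag(R, I_k)` has its last `k` rows
zero and its leading `n × n` principal submatrix equal to `A`. -/
theorem embedding_theorem (n k : ℕ) (L R : Matrix (Fin n) (Fin n) ℂ)
    (hL : L ∈ Matrix.unitaryGroup (Fin n) ℂ) (hR : R ∈ Matrix.unitaryGroup (Fin n) ℂ)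
    (Z Q : Matrix (Fin n) (Fin k) ℂ) (G : Matrix (Fin k) (Fin k) ℂ)
    (hQ : Q.conjTranspose * Q = 1)
    (hGtri : ∀ i j : Fin k, j.1 < i.1 → G i j = 0)
    (hZ : Z = Q * G)
    (A : Matrix (Fin n) (Fin n) ℂ)
    (hA : A = L * (1 + EkM n k * Z.conjTranspose) * R) :
    UhatM n k Q ∈ Matrix.unitaryGroup (Fin (n + k)) ℂ ∧
    (∀ x y : Fin (n + k), n ≤ x.1 → AhatM n k L R Q G x y = 0) ∧
    (∀ x y : Fin n, AhatM n k L R Q G ⟨x.1, by omega⟩ ⟨y.1, by omega⟩ = A x y) := by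
  have hkn : k ≤ n := by
    have h1 : (1 : Matrix (Fin k) (Fin k) ℂ).rank = k := by simp [Matrix.rank_one]
    have h2 := Matrix.rank_mul_le_left Q.conjTranspose Q
    have h3 := Matrix.rank_le_card_width Q.conjTranspose
    rw [hQ] at h2
    simp at h3
    omega
  set e : Fin n ⊕ Fin k ≃ Fin (n + k) := finSumFinEquiv with he
  -- block form of X
  have hX : (XM n k Q).submatrix ⇑e id = fromRows Q (-1) := aux_stack n k Q (-1)
  have hXH : ((XM n k Q).conjTranspose).submatrix id ⇑e =
      fromCols Q.conjTranspose (-1) := by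
    have h0 : ((XM n k Q).conjTranspose).submatrix id ⇑e =
        ((XM n k Q).submatrix ⇑e id).conjTranspose := by
      rw [conjTranspose_submatrix]
    rw [h0, hX, conjTranspose_fromRows_eq_fromCols_conjTranspose]
    congr 1
    simp
  -- block form of X Xᴴ
  have hXX : (XM n k Q * (XM n k Q).conjTranspose).submatrix ⇑e ⇑e =
      fromBlocks (Q * Q.conjTranspose) (-Q) (-Q.conjTranspose) 1 := by
    have h := Matrix.submatrix_mul_equiv (XM n k Q) (XM n k Q).conjTranspose
      ⇑e (Equiv.refl (Fin k)) ⇑e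
    rw [Equiv.coe_refl] at h
    rw [← h, hX, hXH, fromRows_mul_fromCols]
    congr 1 <;> simp
  -- block form of Û
  have hU : (UhatM n k Q).submatrix ⇑e ⇑e =
      fromBlocks (1 - Q * Q.conjTranspose) Q Q.conjTranspose 0 := by
    rw [UhatM]
    simp only [Matrix.submatrix_sub, Pi.sub_apply]
    rw [Matrix.submatrix_one_equiv, hXX, ← fromBlocks_one, aux_fromBlocks_sub]
    congr 1 <;> simp
  -- block form of the middle factor
  have hMid : (UhatM n k Q +
      (topM n k G.conjTranspose + XM n k Q) * (stackM n k Q 0).conjTranspose).submatrix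
        ⇑e ⇑e =
      fromBlocks (1 + EkM n k * Z.conjTranspose) Q 0 0 := by
    have hSH : ((stackM n k Q 0).conjTranspose).submatrix id ⇑e =
        fromCols Q.conjTranspose 0 := by
      have h0 : ((stackM n k Q 0).conjTranspose).submatrix id ⇑e =
          ((stackM n k Q 0).submatrix ⇑e id).conjTranspose := by
        rw [conjTranspose_submatrix]
      rw [h0, aux_stack, conjTranspose_fromRows_eq_fromCols_conjTranspose]
      congr 1
      simp
    have h := Matrix.submatrix_mul_equiv (topM n k G.conjTranspose + XM n k Q)
      (stackM n k Q 0).conjTranspose ⇑e (Equiv.refl (Fin k)) ⇑e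
    rw [Equiv.coe_refl] at h
    simp only [Matrix.submatrix_add, Pi.add_apply]
    rw [hU, ← h]
    simp only [Matrix.submatrix_add, Pi.add_apply]
    rw [aux_top n k hkn, hX, hSH, aux_fromRows_add, fromRows_mul_fromCols,
      aux_fromBlocks_add]
    have hTL : 1 - Q * Q.conjTranspose +
        (EkM n k * G.conjTranspose + Q) * Q.conjTranspose =
        1 + EkM n k * Z.conjTranspose := by
      have h1 : (EkM n k * G.conjTranspose + Q) * Q.conjTranspose =
          EkM n k * Z.conjTranspose + Q * Q.conjTranspose := by
        rw [hZ, conjTranspose_mul, Matrix.add_mul, Matrix.mul_assoc]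
      rw [h1]
      abel
    have hBL : Q.conjTranspose +
        ((0 : Matrix (Fin k) (Fin k) ℂ) + (-1 : Matrix (Fin k) (Fin k) ℂ)) * Q.conjTranspose
        = 0 := by
      rw [zero_add, Matrix.neg_mul, Matrix.one_mul]
      abel
    rw [hTL, hBL]
    congr 1 <;> simp
  -- block form of Â
  have hAhat : (AhatM n k L R Q G).submatrix ⇑e ⇑e = fromBlocks A (L * Q) 0 0 := by
    rw [AhatM]
    have h1 := Matrix.submatrix_mul_equiv
      (diagLI n k L * (UhatM n k Q +
        (topM n k G.conjTranspose + XM n k Q) * (stackM n k Q 0).conjTranspose))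
      (diagLI n k R) ⇑e e ⇑e
    have h2 := Matrix.submatrix_mul_equiv (diagLI n k L)
      (UhatM n k Q +
        (topM n k G.conjTranspose + XM n k Q) * (stackM n k Q 0).conjTranspose) ⇑e e ⇑e
    rw [← h1, ← h2, hMid, aux_diag, aux_diag, fromBlocks_multiply, fromBlocks_multiply, hA]
    congr 1 <;> simp [Matrix.mul_assoc]
  have hsymm_inl : ∀ x : Fin n, (⟨x.1, by omega⟩ : Fin (n + k)) = e (Sum.inl x) := by
    intro x
    apply Fin.ext
    simp [he]
  refine ⟨?_, ?_, ?_⟩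
  · -- unitarity of Û
    have hH : (UhatM n k Q).conjTranspose = UhatM n k Q := by
      rw [UhatM]
      simp [conjTranspose_sub, conjTranspose_mul, Matrix.mul_assoc]
    have hUU : UhatM n k Q * UhatM n k Q = 1 := by
      have hb : (UhatM n k Q * UhatM n k Q).submatrix ⇑e ⇑e =
          (1 : Matrix (Fin (n + k)) (Fin (n + k)) ℂ).submatrix ⇑e ⇑e := by
        rw [← Matrix.submatrix_mul_equiv (UhatM n k Q) (UhatM n k Q) ⇑e e ⇑e, hU,
          Matrix.submatrix_one_equiv, fromBlocks_multiply]
        have key : Q * Q.conjTranspose * (Q * Q.conjTranspose) = Q * Q.conjTranspose := by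
          rw [Matrix.mul_assoc, ← Matrix.mul_assoc Q.conjTranspose, hQ, Matrix.one_mul]
        have hTL : (1 - Q * Q.conjTranspose) * (1 - Q * Q.conjTranspose) +
            Q * Q.conjTranspose = 1 := by
          simp only [Matrix.sub_mul, Matrix.mul_sub, Matrix.one_mul, Matrix.mul_one, key]
          abel
        have hTR : (1 - Q * Q.conjTranspose) * Q + Q * (0 : Matrix (Fin k) (Fin k) ℂ)
            = 0 := by
          rw [Matrix.sub_mul, Matrix.one_mul, Matrix.mul_assoc, hQ, Matrix.mul_one,
            Matrix.mul_zero]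
          simp
        have hBL : Q.conjTranspose * (1 - Q * Q.conjTranspose) +
            (0 : Matrix (Fin k) (Fin k) ℂ) * Q.conjTranspose = 0 := by
          rw [Matrix.mul_sub, Matrix.mul_one, ← Matrix.mul_assoc, hQ, Matrix.one_mul,
            Matrix.zero_mul]
          simp
        have hBR : Q.conjTranspose * Q + (0 : Matrix (Fin k) (Fin k) ℂ) * 0 = 1 := by
          rw [hQ, Matrix.zero_mul, add_zero]
        rw [hTL, hTR, hBL, hBR, fromBlocks_one]
      have h2 := congrArg (fun M => M.submatrix ⇑e.symm ⇑e.symm) hb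
      simpa [Matrix.submatrix_submatrix, Equiv.self_comp_symm] using h2
    rw [Matrix.mem_unitaryGroup_iff]
    rw [show star (UhatM n k Q) = UhatM n k Q from hH]
    exact hUU
  · -- last k rows of Â are zero
    intro x y hx
    have hxe : x = e (Sum.inr ⟨x.1 - n, by omega⟩) := by
      apply Fin.ext
      simp [he]
      omega
    have h0 : AhatM n k L R Q G x y =
        (AhatM n k L R Q G).submatrix ⇑e ⇑e (Sum.inr ⟨x.1 - n, by omega⟩) (e.symm y) := by
      rw [Matrix.submatrix_apply, Equiv.apply_symm_apply, ← hxe]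
    rw [h0, hAhat]
    cases h : e.symm y <;> simp [fromBlocks]
  · -- leading principal block of Â equals A
    intro x y
    have h0 : AhatM n k L R Q G ⟨x.1, by omega⟩ ⟨y.1, by omega⟩ =
        (AhatM n k L R Q G).submatrix ⇑e ⇑e (Sum.inl x) (Sum.inl y) := by
      rw [Matrix.submatrix_apply, ← hsymm_inl, ← hsymm_inl]
    rw [h0, hAhat]
    simp [fromBlocks]
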